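/- For n ≥ 1, F_{2n}(s) = ∑_{k=0}^{n-1} a(n,k) F_{2k+1}(s) where a(n,k) = (-1)^{n-k-1} (1/(2k+1)) · C(2n, 2k) · G_{2n-2k}, with G the Genocchi numbers. -/

import Mathlib

noncomputable def fibPoly : ℕ → Polynomial ℚ
  | 0 => 0
  | 1 => 1
  | n + 2 => fibPoly (n + 1) + Polynomial.X * fibPoly n

/-- EGF of the Genocchi numbers: 2z/(1+e^z). -/
noncomputable def genocchiSeries : PowerSeries ℚ :=
  2 * PowerSeries.X * (1 + PowerSeries.exp ℚ)⁻¹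

/-- The coefficients g_n with 2z/(1+e^z) = ∑ g_n z^n/n!. -/
noncomputable def gcoef (n : ℕ) : ℚ := n.factorial * PowerSeries.coeff (R := ℚ) n genocchiSeries

/-- The Genocchi number G_{2n}, from 2z/(1+e^z) = z + ∑_{n≥1} (-1)^n G_{2n} z^{2n}/(2n)!. -/
noncomputable def genocchi (n : ℕ) : ℚ := (-1) ^ n * gcoef (2 * n)


noncomputable def Tsum (n : ℕ) : Polynomial ℚ :=
  ∑ m ∈ Finset.range (n+1), Polynomial.C ((-1:ℚ)^(m+1) * (n.choose m)) * fibPoly m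

noncomputable def Usum (n : ℕ) : Polynomial ℚ :=
  ∑ m ∈ Finset.range (n+1), Polynomial.C ((-1:ℚ)^(m+1) * (n.choose m)) * fibPoly (m+1)

lemma Tsucc (n : ℕ) : Tsum (n+1) = Tsum n - Usum n := by
  unfold Tsum Usum
  rw [Finset.sum_range_succ' (fun m => Polynomial.C ((-1:ℚ)^(m+1) * ((n+1).choose m)) * fibPoly m)]
  have h0 : fibPoly 0 = 0 := rfl
  rw [h0, mul_zero, add_zero]
  have step : ∀ i ∈ Finset.range (n+1),
      Polynomial.C ((-1:ℚ)^(i+1+1) * ((n+1).choose (i+1))) * fibPoly (i+1)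
        = Polynomial.C ((-1:ℚ)^(i+1+1) * (n.choose (i+1))) * fibPoly (i+1)
          + (- (Polynomial.C ((-1:ℚ)^(i+1) * (n.choose i)) * fibPoly (i+1))) := by
    intro i _
    have hs : ((-1:ℚ))^(i+1+1) = -((-1:ℚ))^(i+1) := by ring
    rw [Nat.choose_succ_succ, Nat.cast_add, mul_add, map_add, add_mul, add_comm]
    congr 1
    rw [hs, neg_mul, map_neg, neg_mul]
  rw [Finset.sum_congr rfl step, Finset.sum_add_distrib, Finset.sum_neg_distrib,
    sub_eq_add_neg]
  congr 1
  rw [Finset.sum_range_succ, Nat.choose_succ_self, Nat.cast_zero, mul_zero, map_zero,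
    zero_mul, add_zero,
    Finset.sum_range_succ' (fun m => Polynomial.C ((-1:ℚ)^(m+1) * (n.choose m)) * fibPoly m),
    h0, mul_zero, add_zero]

lemma Usucc (n : ℕ) : Usum (n+1) = - (Polynomial.X * Tsum n) := by
  unfold Tsum Usum
  rw [Finset.sum_range_succ' (fun m => Polynomial.C ((-1:ℚ)^(m+1) * ((n+1).choose m)) * fibPoly (m+1))]
  have step : ∀ i ∈ Finset.range (n+1),
      Polynomial.C ((-1:ℚ)^(i+1+1) * ((n+1).choose (i+1))) * fibPoly (i+1+1)
        = Polynomial.C ((-1:ℚ)^(i+1+1) * (n.choose (i+1))) * fibPoly (i+1+1)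
          + (- (Polynomial.C ((-1:ℚ)^(i+1) * (n.choose i)) * (fibPoly (i+1) + Polynomial.X * fibPoly i))) := by
    intro i _
    have hf : fibPoly (i+1+1) = fibPoly (i+1) + Polynomial.X * fibPoly i := rfl
    rw [hf, Nat.choose_succ_succ, Nat.cast_add]
    have hc : ((-1:ℚ))^(i+1+1) * ((n.choose i : ℚ) + (n.choose (i+1) : ℚ))
        = ((-1:ℚ))^(i+1+1) * (n.choose (i+1)) + (-(((-1:ℚ))^(i+1) * (n.choose i))) := by
      ring
    rw [hc, map_add, map_neg]
    ring
  rw [Finset.sum_congr rfl step, Finset.sum_add_distrib, Finset.sum_neg_distrib]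
  have hA : (∑ i ∈ Finset.range (n+1),
      Polynomial.C ((-1:ℚ)^(i+1+1) * (n.choose (i+1))) * fibPoly (i+1+1))
      + Polynomial.C ((-1:ℚ)^(0+1) * ((n+1).choose 0)) * fibPoly (0+1)
      = ∑ m ∈ Finset.range (n+1), Polynomial.C ((-1:ℚ)^(m+1) * (n.choose m)) * fibPoly (m+1) := by
    rw [Finset.sum_range_succ, Nat.choose_succ_self, Nat.cast_zero, mul_zero, map_zero,
      zero_mul, add_zero]
    rw [Finset.sum_range_succ' (fun m => Polynomial.C ((-1:ℚ)^(m+1) * (n.choose m)) * fibPoly (m+1))]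
    simp
  rw [add_right_comm, hA]
  have hB : ∀ i ∈ Finset.range (n+1),
      Polynomial.C ((-1:ℚ)^(i+1) * (n.choose i)) * (fibPoly (i+1) + Polynomial.X * fibPoly i)
      = Polynomial.C ((-1:ℚ)^(i+1) * (n.choose i)) * fibPoly (i+1)
        + Polynomial.X * (Polynomial.C ((-1:ℚ)^(i+1) * (n.choose i)) * fibPoly i) := by
    intro i _; ring
  rw [Finset.sum_congr rfl hB, Finset.sum_add_distrib, ← Finset.mul_sum]
  ring

lemma Tval : ∀ n, Tsum n = fibPoly n ∧ Usum n = fibPoly n - fibPoly (n+1) := by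
  intro n
  induction n with
  | zero =>
    constructor <;>
      simp [Tsum, Usum, Finset.sum_range_one, show fibPoly 0 = 0 from rfl,
        show fibPoly 1 = 1 from rfl]
  | succ n ih =>
    have hT : Tsum (n+1) = fibPoly (n+1) := by
      rw [Tsucc, ih.1, ih.2]; ring
    refine ⟨hT, ?_⟩
    rw [Usucc, ih.1]
    have : fibPoly (n+2) = fibPoly (n+1) + Polynomial.X * fibPoly n := rfl
    rw [this]; ring

lemma key (n : ℕ) :
    ∑ m ∈ Finset.range (n+1), Polynomial.C ((-1:ℚ)^(m+1) * (n.choose m)) * fibPoly m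
      = fibPoly n := (Tval n).1

open PowerSeries

noncomputable def Aser : PowerSeries (Polynomial ℚ) :=
  PowerSeries.mk fun m => Polynomial.C (((m.factorial : ℚ))⁻¹) * fibPoly m

noncomputable def Dser : PowerSeries (Polynomial ℚ) :=
  PowerSeries.mk fun m => Polynomial.C ((-1:ℚ)^(m+1) * ((m.factorial : ℚ))⁻¹) * fibPoly m

noncomputable def Eser : PowerSeries (Polynomial ℚ) :=
  PowerSeries.map (Polynomial.C : ℚ →+* Polynomial ℚ) (PowerSeries.exp ℚ)

lemma coeff_Eser (m : ℕ) : PowerSeries.coeff m Eser = Polynomial.C ((m.factorial : ℚ)⁻¹) := by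
  rw [Eser, PowerSeries.coeff_map, PowerSeries.coeff_exp]
  simp [one_div]

lemma AD : Aser = Dser * Eser := by
  ext n
  rw [PowerSeries.coeff_mul, Finset.Nat.sum_antidiagonal_eq_sum_range_succ_mk]
  have hstep : ∀ m ∈ Finset.range (n+1),
      (PowerSeries.coeff m Dser) * (PowerSeries.coeff (n - m) Eser)
        = Polynomial.C (((n.factorial : ℚ))⁻¹) *
            (Polynomial.C ((-1:ℚ)^(m+1) * (n.choose m)) * fibPoly m) := by
    intro m hm
    rw [Finset.mem_range, Nat.lt_succ_iff] at hm
    rw [coeff_Eser, Dser, PowerSeries.coeff_mk]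
    rw [mul_right_comm, ← map_mul, ← mul_assoc, ← map_mul]
    congr 2
    rw [Nat.cast_choose ℚ hm]
    have h1 : (m.factorial : ℚ) ≠ 0 := Nat.cast_ne_zero.mpr m.factorial_ne_zero
    have h2 : ((n - m).factorial : ℚ) ≠ 0 := Nat.cast_ne_zero.mpr (n - m).factorial_ne_zero
    have h3 : (n.factorial : ℚ) ≠ 0 := Nat.cast_ne_zero.mpr n.factorial_ne_zero
    field_simp
  rw [Finset.sum_congr rfl hstep, ← Finset.mul_sum, key]
  rw [Aser, PowerSeries.coeff_mk]

noncomputable def Sser : PowerSeries (Polynomial ℚ) :=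
  PowerSeries.mk fun m =>
    if Odd m then Polynomial.C (((m.factorial : ℚ))⁻¹) * fibPoly m else 0

noncomputable def Ghat : PowerSeries (Polynomial ℚ) :=
  PowerSeries.map (Polynomial.C : ℚ →+* Polynomial ℚ) genocchiSeries

lemma hS2 : Aser + Dser = 2 * Sser := by
  rw [two_mul]
  ext m
  rw [map_add, map_add, Aser, Dser, Sser, PowerSeries.coeff_mk, PowerSeries.coeff_mk,
    PowerSeries.coeff_mk]
  rcases Nat.even_or_odd m with he | ho
  · rw [if_neg (Nat.not_odd_iff_even.mpr he)]
    have hp : ((-1:ℚ))^(m+1) = -1 := Odd.neg_one_pow (by exact he.add_one)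
    rw [hp, neg_one_mul, map_neg, neg_mul, add_neg_cancel, add_zero]
  · rw [if_pos ho]
    have hp : ((-1:ℚ))^(m+1) = 1 := Even.neg_one_pow (by exact ho.add_one)
    rw [hp, one_mul]

lemma genocchi_mul : genocchiSeries * (1 + PowerSeries.exp ℚ) = 2 * PowerSeries.X := by
  have h : PowerSeries.constantCoeff (R := ℚ) (1 + PowerSeries.exp ℚ) ≠ 0 := by
    rw [map_add, map_one, PowerSeries.constantCoeff_exp]
    norm_num
  rw [genocchiSeries, mul_assoc, PowerSeries.inv_mul_cancel _ h, mul_one]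

lemma Ghat_mul : Ghat * (1 + Eser) = 2 * PowerSeries.X := by
  have := congrArg (PowerSeries.map (Polynomial.C : ℚ →+* Polynomial ℚ)) genocchi_mul
  rwa [map_mul, map_add, map_one, map_mul, map_ofNat, PowerSeries.map_X] at this

lemma main_eq : Ghat * Sser = PowerSeries.X * Dser := by
  have hne : (1 + Eser) ≠ 0 := by
    intro h
    have := congrArg (PowerSeries.constantCoeff (R := Polynomial ℚ)) h
    rw [map_add, map_one, map_zero] at this
    have hE : PowerSeries.constantCoeff (R := Polynomial ℚ) Eser = 1 := by
      rw [Eser, ← PowerSeries.coeff_zero_eq_constantCoeff, PowerSeries.coeff_map,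
        PowerSeries.coeff_zero_eq_constantCoeff, PowerSeries.constantCoeff_exp, map_one]
    rw [hE] at this
    norm_num at this
  apply mul_right_cancel₀ hne
  calc Ghat * Sser * (1 + Eser) = (Ghat * (1 + Eser)) * Sser := by ring
    _ = (2 * PowerSeries.X) * Sser := by rw [Ghat_mul]
    _ = PowerSeries.X * (2 * Sser) := by ring
    _ = PowerSeries.X * (Aser + Dser) := by rw [hS2]
    _ = PowerSeries.X * (Dser * Eser + Dser) := by rw [AD]
    _ = PowerSeries.X * Dser * (1 + Eser) := by ring

lemma sum_split {M : Type*} [AddCommMonoid M] (N : ℕ) (f : ℕ → M) :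
    ∑ j ∈ Finset.range (2*N), f j = ∑ k ∈ Finset.range N, (f (2*k) + f (2*k+1)) := by
  induction N with
  | zero => simp
  | succ N ih =>
    rw [Finset.sum_range_succ, ← ih, show 2*(N+1) = (2*N+1)+1 by ring,
      Finset.sum_range_succ, Finset.sum_range_succ, add_assoc]

lemma hgc (m : ℕ) :
    PowerSeries.coeff (R := ℚ) m genocchiSeries = gcoef m / m.factorial := by
  rw [gcoef]
  have : ((m.factorial : ℚ)) ≠ 0 := Nat.cast_ne_zero.mpr m.factorial_ne_zero
  field_simp

lemma hg0 : PowerSeries.coeff (R := ℚ) 0 genocchiSeries = 0 := by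
  rw [genocchiSeries, PowerSeries.coeff_zero_eq_constantCoeff]
  simp

lemma coeff_Ghat (m : ℕ) :
    PowerSeries.coeff m Ghat = Polynomial.C (gcoef m / m.factorial) := by
  rw [Ghat, PowerSeries.coeff_map, hgc]

lemma hscalar (n k : ℕ) (hk : k < n) :
    (-1:ℚ)^(n-k-1) * (1/(2*(k:ℚ)+1)) * (((2*n).choose (2*k)) : ℚ) * genocchi (n-k)
      = -(((2*n).factorial : ℚ)) *
          (gcoef (2*(n-k)) / (((2*(n-k)).factorial : ℚ)) * ((((2*k+1).factorial : ℚ))⁻¹)) := by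
  obtain ⟨j, hj⟩ : ∃ j, n - k = j + 1 := ⟨n - k - 1, by omega⟩
  rw [genocchi, hj]
  have hsign : (-1:ℚ)^(n-k-1) * (-1:ℚ)^(j+1) = -1 := by
    rw [show n - k - 1 = j by omega, pow_succ]
    ring_nf
    rw [show ((-1:ℚ))^(j*2) = 1 from Even.neg_one_pow ⟨j, by ring⟩]
  have hch : (((2*n).choose (2*k)) : ℚ)
      = ((2*n).factorial : ℚ) / (((2*k).factorial : ℚ) * (((2*n - 2*k).factorial : ℚ))) :=
    Nat.cast_choose ℚ (by omega)
  rw [show (2*n - 2*k) = 2*(j+1) by omega] at hch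
  rw [show 2*(j+1) = 2*(j+1) from rfl]
  have hfact : (((2*k+1).factorial : ℚ)) = (2*(k:ℚ)+1) * ((2*k).factorial : ℚ) := by
    rw [Nat.factorial_succ]
    push_cast
    ring
  have h1 : ((2*k).factorial : ℚ) ≠ 0 := Nat.cast_ne_zero.mpr (Nat.factorial_ne_zero _)
  have h2 : (((2*(j+1)).factorial : ℚ)) ≠ 0 := Nat.cast_ne_zero.mpr (Nat.factorial_ne_zero _)
  have h3 : (2*(k:ℚ)+1) ≠ 0 := by positivity
  have h4 : (((2*k+1).factorial : ℚ)) ≠ 0 := Nat.cast_ne_zero.mpr (Nat.factorial_ne_zero _)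
  rw [hch, hfact]
  field_simp
  ring_nf
  rw [show 1 + j - 1 = j by omega, mul_assoc, ← pow_add, show ((-1:ℚ))^(j+j) = 1 from Even.neg_one_pow ⟨j, rfl⟩]
  ring

theorem stmt4 (n : ℕ) (hn : 1 ≤ n) :
    fibPoly (2 * n) =
      ∑ k ∈ Finset.range n,
        Polynomial.C ((-1 : ℚ) ^ (n - k - 1) * (1 / (2 * (k : ℚ) + 1)) *
            ((2 * n).choose (2 * k) : ℚ) * genocchi (n - k)) * fibPoly (2 * k + 1) := by
  have h := congrArg (PowerSeries.coeff (R := Polynomial ℚ) (2*n+1)) main_eq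
  rw [PowerSeries.coeff_succ_X_mul, PowerSeries.coeff_mul,
    Finset.Nat.sum_antidiagonal_eq_sum_range_succ
      (fun a b => (PowerSeries.coeff (R := Polynomial ℚ) a) Ghat *
        (PowerSeries.coeff (R := Polynomial ℚ) b) Sser),
    show (2*n+1).succ = 2*(n+1) by omega, sum_split (n+1) _, Dser, PowerSeries.coeff_mk] at h
  have hterm1 : ∀ k ∈ Finset.range (n+1),
      ((PowerSeries.coeff (R := Polynomial ℚ) (2*k)) Ghat
          * (PowerSeries.coeff (R := Polynomial ℚ) (2*n+1 - (2*k))) Sser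
        + (PowerSeries.coeff (R := Polynomial ℚ) (2*k+1)) Ghat
          * (PowerSeries.coeff (R := Polynomial ℚ) (2*n+1 - (2*k+1))) Sser)
      = Polynomial.C (gcoef (2*k) / (((2*k).factorial : ℚ))) *
          (Polynomial.C ((((2*(n-k)+1).factorial : ℚ))⁻¹) * fibPoly (2*(n-k)+1)) := by
    intro k hk
    rw [Finset.mem_range, Nat.lt_succ_iff] at hk
    rw [show 2*n+1 - (2*k) = 2*(n-k)+1 by omega, show 2*n+1 - (2*k+1) = 2*(n-k) by omega,
      Sser, PowerSeries.coeff_mk, PowerSeries.coeff_mk,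
      if_pos ⟨n-k, by ring⟩, if_neg (Nat.not_odd_iff_even.mpr (even_two_mul _)),
      mul_zero, add_zero, coeff_Ghat]
  rw [Finset.sum_congr rfl hterm1,
    Finset.sum_range_succ' (fun k => Polynomial.C (gcoef (2*k) / (((2*k).factorial : ℚ))) *
      (Polynomial.C ((((2*(n-k)+1).factorial : ℚ))⁻¹) * fibPoly (2*(n-k)+1)))] at h
  have hzero : Polynomial.C (gcoef (2*0) / (((2*0).factorial : ℚ))) *
      (Polynomial.C ((((2*(n-0)+1).factorial : ℚ))⁻¹) * fibPoly (2*(n-0)+1)) = 0 := by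
    have : gcoef (2*0) = 0 := by
      rw [show 2*0 = 0 by ring, gcoef, hg0]; ring
    rw [this, zero_div, map_zero, zero_mul]
  rw [hzero, add_zero] at h
  -- reflect the sum
  have hrefl := Finset.sum_range_reflect (fun k =>
    Polynomial.C (gcoef (2*(n-k)) / (((2*(n-k)).factorial : ℚ))) *
      (Polynomial.C ((((2*k+1).factorial : ℚ))⁻¹) * fibPoly (2*k+1))) n
  have hcongr : ∀ i ∈ Finset.range n,
      Polynomial.C (gcoef (2*(i+1)) / (((2*(i+1)).factorial : ℚ))) *
        (Polynomial.C ((((2*(n-(i+1))+1).factorial : ℚ))⁻¹) * fibPoly (2*(n-(i+1))+1))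
      = Polynomial.C (gcoef (2*(n-(n-1-i))) / (((2*(n-(n-1-i))).factorial : ℚ))) *
        (Polynomial.C ((((2*(n-1-i)+1).factorial : ℚ))⁻¹) * fibPoly (2*(n-1-i)+1)) := by
    intro i hi
    rw [Finset.mem_range] at hi
    rw [show n-(n-1-i) = i+1 by omega, show n-(i+1) = n-1-i by omega]
  rw [Finset.sum_congr rfl hcongr, hrefl] at h
  -- now h : ∑ k ∈ range n, C(gcoef(2(n-k))/(2(n-k))!) * (C((2k+1)!⁻¹) * F_{2k+1})
  --        = C((-1)^(2n+1) * ((2n)!)⁻¹) * F_{2n}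
  have hterm2 : ∀ k ∈ Finset.range n,
      Polynomial.C ((-1 : ℚ) ^ (n - k - 1) * (1 / (2 * (k : ℚ) + 1)) *
            ((2 * n).choose (2 * k) : ℚ) * genocchi (n - k)) * fibPoly (2 * k + 1)
      = Polynomial.C (-(((2*n).factorial : ℚ))) *
          (Polynomial.C (gcoef (2*(n-k)) / (((2*(n-k)).factorial : ℚ))) *
            (Polynomial.C ((((2*k+1).factorial : ℚ))⁻¹) * fibPoly (2*k+1))) := by
    intro k hk
    rw [Finset.mem_range] at hk
    rw [hscalar n k hk, map_mul, map_mul]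
    ring
  rw [Finset.sum_congr rfl hterm2, ← Finset.mul_sum, h, ← mul_assoc, ← map_mul]
  have hone : -(((2*n).factorial : ℚ)) * ((-1:ℚ)^(2*n+1) * (((2*n).factorial : ℚ))⁻¹) = 1 := by
    have hne : (((2*n).factorial : ℚ)) ≠ 0 := Nat.cast_ne_zero.mpr (Nat.factorial_ne_zero _)
    rw [Odd.neg_one_pow ⟨n, by ring⟩]
    field_simp
  rw [hone, map_one, one_mul]
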